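/- For every t > 0, e^{-t}/√(πt) + 2Φ(√(2t)) > 2, where Φ is the standard normal CDF; moreover ψ(t) := e^{-t}/√(πt) + 2Φ(√(2t)) tends to 2 as t → ∞ and ψ(t)·√(πt) tends to 1 as t → 0⁺. -/

import Mathlib

open MeasureTheory Real Filter

/-- The standard normal cumulative distribution function. -/
noncomputable def Phi (x : ℝ) : ℝ := ∫ y in Set.Iic x, Real.exp (-y ^ 2 / 2) / Real.sqrt (2 * Real.pi)

/-- `psi t` is the density of the branching-coalescing point set of the Brownian net
started from the full real line at time `t`. -/
noncomputable def psi (t : ℝ) : ℝ :=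
  Real.exp (-t) / Real.sqrt (Real.pi * t) + 2 * Phi (Real.sqrt (2 * t))

open Set

lemma gauss_integrable : Integrable (fun y : ℝ => Real.exp (-y ^ 2 / 2)) := by
  have := integrable_exp_neg_mul_sq (b := (1/2 : ℝ)) (by norm_num)
  convert this using 2 with y
  ring_nf

lemma gauss_total : ∫ y : ℝ, Real.exp (-y ^ 2 / 2) = Real.sqrt (2 * Real.pi) := by
  have := integral_gaussian (1/2 : ℝ)
  rw [show (Real.pi / (1/2)) = 2 * Real.pi by ring] at this
  rw [← this]
  congr 1 with y
  ring_nf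

lemma mom_integral {x : ℝ} (hx : 0 < x) :
    ∫ y in Set.Ioi x, y * Real.exp (-y ^ 2 / 2) = Real.exp (-x ^ 2 / 2) := by
  have hderiv : ∀ y ∈ Set.Ici x, HasDerivAt (fun y : ℝ => -Real.exp (-y ^ 2 / 2))
      (y * Real.exp (-y ^ 2 / 2)) y := by
    intro y _
    have h : HasDerivAt (fun y : ℝ => -y ^ 2 / 2) (-y) y := by
      have := ((hasDerivAt_pow 2 y).neg).div_const 2
      simpa using this.congr_deriv (by push_cast; ring)
    exact ((h.exp).neg).congr_deriv (by ring)
  have htend : Tendsto (fun y : ℝ => -Real.exp (-y ^ 2 / 2)) atTop (nhds 0) := by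
    rw [show (0:ℝ) = -0 by ring]
    refine Tendsto.neg ?_
    refine Real.tendsto_exp_atBot.comp ?_
    refine Tendsto.atBot_div_const (by norm_num) ?_
    exact tendsto_neg_atBot_iff.mpr (tendsto_pow_atTop (by norm_num))
  have := integral_Ioi_of_hasDerivAt_of_nonneg' hderiv
    (fun y hy => mul_nonneg (le_trans hx.le (le_of_lt hy.out)) (Real.exp_nonneg _)) htend
  simpa using this

lemma mom_integrable {x : ℝ} (hx : 0 < x) :
    IntegrableOn (fun y : ℝ => y * Real.exp (-y ^ 2 / 2)) (Set.Ioi x) := by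
  have hderiv : ∀ y ∈ Set.Ici x, HasDerivAt (fun y : ℝ => -Real.exp (-y ^ 2 / 2))
      (y * Real.exp (-y ^ 2 / 2)) y := by
    intro y _
    have h : HasDerivAt (fun y : ℝ => -y ^ 2 / 2) (-y) y := by
      have := ((hasDerivAt_pow 2 y).neg).div_const 2
      simpa using this.congr_deriv (by push_cast; ring)
    exact ((h.exp).neg).congr_deriv (by ring)
  have htend : Tendsto (fun y : ℝ => -Real.exp (-y ^ 2 / 2)) atTop (nhds 0) := by
    rw [show (0:ℝ) = -0 by ring]
    refine Tendsto.neg ?_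
    refine Real.tendsto_exp_atBot.comp ?_
    refine Tendsto.atBot_div_const (by norm_num) ?_
    exact tendsto_neg_atBot_iff.mpr (tendsto_pow_atTop (by norm_num))
  exact integrableOn_Ioi_deriv_of_nonneg' hderiv
    (fun y hy => mul_nonneg (le_trans hx.le (le_of_lt hy.out)) (Real.exp_nonneg _)) htend

lemma tail_lt {x : ℝ} (hx : 0 < x) :
    ∫ y in Set.Ioi x, Real.exp (-y ^ 2 / 2) < Real.exp (-x ^ 2 / 2) / x := by
  have hI : IntegrableOn (fun y : ℝ => Real.exp (-y ^ 2 / 2)) (Set.Ioi x) :=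
    gauss_integrable.integrableOn
  have hM := mom_integrable hx
  have hg : IntegrableOn
      (fun y : ℝ => y * Real.exp (-y ^ 2 / 2) / x - Real.exp (-y ^ 2 / 2)) (Set.Ioi x) :=
    (hM.div_const x).sub hI
  have hpos : 0 < ∫ y in Set.Ioi x,
      (y * Real.exp (-y ^ 2 / 2) / x - Real.exp (-y ^ 2 / 2)) := by
    rw [setIntegral_pos_iff_support_of_nonneg_ae ?_ hg]
    · have hsub : Set.Ioi x ⊆ Function.support
          (fun y : ℝ => y * Real.exp (-y ^ 2 / 2) / x - Real.exp (-y ^ 2 / 2)) ∩ Set.Ioi x := by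
        intro y hy
        refine ⟨?_, hy⟩
        have hxy : x < y := hy
        have hE := Real.exp_pos (-y ^ 2 / 2)
        have h2 : y * Real.exp (-y ^ 2 / 2) / x = y / x * Real.exp (-y ^ 2 / 2) := by ring
        have h1 : (1:ℝ) < y / x := (one_lt_div hx).mpr hxy
        have : Real.exp (-y ^ 2 / 2) < y / x * Real.exp (-y ^ 2 / 2) :=
          lt_mul_of_one_lt_left hE h1
        simp only [Function.mem_support]
        intro hcon
        rw [h2] at hcon
        linarith [sub_eq_zero.mp hcon]
      refine lt_of_lt_of_le ?_ (measure_mono hsub)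
      simp [Real.volume_Ioi]
    · filter_upwards [ae_restrict_mem measurableSet_Ioi] with y hy
      have h1 : (1:ℝ) ≤ y / x := (one_le_div hx).mpr (le_of_lt hy)
      have : Real.exp (-y ^ 2 / 2) ≤ y / x * Real.exp (-y ^ 2 / 2) :=
        le_mul_of_one_le_left (Real.exp_nonneg _) h1
      have h2 : y * Real.exp (-y ^ 2 / 2) / x = y / x * Real.exp (-y ^ 2 / 2) := by ring
      simp only [Pi.zero_apply]
      rw [h2]
      linarith
  have heq : ∫ y in Set.Ioi x,
      (y * Real.exp (-y ^ 2 / 2) / x - Real.exp (-y ^ 2 / 2))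
      = Real.exp (-x ^ 2 / 2) / x - ∫ y in Set.Ioi x, Real.exp (-y ^ 2 / 2) := by
    rw [integral_sub (hM.div_const x) hI, integral_div, mom_integral hx]
  linarith [heq ▸ hpos]


lemma tail_nonneg (x : ℝ) : 0 ≤ ∫ y in Set.Ioi x, Real.exp (-y ^ 2 / 2) :=
  setIntegral_nonneg measurableSet_Ioi (fun y _ => Real.exp_nonneg _)

lemma sqrt2pi_pos : 0 < Real.sqrt (2 * Real.pi) :=
  Real.sqrt_pos.mpr (by positivity)

lemma Phi_eq_one_sub (x : ℝ) :
    Phi x = 1 - (∫ y in Set.Ioi x, Real.exp (-y ^ 2 / 2)) / Real.sqrt (2 * Real.pi) := by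
  have h := intervalIntegral.integral_Iic_add_Ioi (f := fun y : ℝ => Real.exp (-y ^ 2 / 2)) (b := x)
    gauss_integrable.integrableOn gauss_integrable.integrableOn
  rw [gauss_total] at h
  have hs := sqrt2pi_pos
  unfold Phi
  rw [integral_div, eq_sub_iff_add_eq, ← add_div, h, div_self hs.ne']

lemma Phi_le_one (x : ℝ) : Phi x ≤ 1 := by
  rw [Phi_eq_one_sub]
  have := div_nonneg (tail_nonneg x) sqrt2pi_pos.le
  linarith

lemma Phi_nonneg (x : ℝ) : 0 ≤ Phi x :=
  setIntegral_nonneg measurableSet_Iic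
    (fun y _ => div_nonneg (Real.exp_nonneg _) (Real.sqrt_nonneg _))

lemma sqrt_prod {t : ℝ} (ht : 0 < t) :
    Real.sqrt (2 * t) * Real.sqrt (2 * Real.pi) = 2 * Real.sqrt (Real.pi * t) := by
  rw [← Real.sqrt_mul (by positivity), show 2 * t * (2 * Real.pi) = 2 ^ 2 * (Real.pi * t) by ring,
    Real.sqrt_mul (by positivity), Real.sqrt_sq (by norm_num)]

lemma psi_gt_two {t : ℝ} (ht : 0 < t) : 2 < psi t := by
  have hx : (0:ℝ) < Real.sqrt (2 * t) := Real.sqrt_pos.mpr (by positivity)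
  have hsq : Real.sqrt (2 * t) ^ 2 = 2 * t := Real.sq_sqrt (by positivity)
  have htail := tail_lt hx
  rw [hsq, show -(2*t)/2 = -t by ring] at htail
  have hs := sqrt2pi_pos
  have hp : (0:ℝ) < Real.sqrt (Real.pi * t) := Real.sqrt_pos.mpr (by positivity)
  unfold psi
  rw [Phi_eq_one_sub]
  have key : 2 * ((∫ y in Set.Ioi (Real.sqrt (2 * t)), Real.exp (-y ^ 2 / 2))
      / Real.sqrt (2 * Real.pi)) < Real.exp (-t) / Real.sqrt (Real.pi * t) := by
    have h1 : 2 * ((Real.exp (-t) / Real.sqrt (2 * t)) / Real.sqrt (2 * Real.pi))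
        = Real.exp (-t) / Real.sqrt (Real.pi * t) := by
      rw [div_div, sqrt_prod ht]
      ring
    calc 2 * ((∫ y in Set.Ioi (Real.sqrt (2 * t)), Real.exp (-y ^ 2 / 2))
          / Real.sqrt (2 * Real.pi))
        < 2 * ((Real.exp (-t) / Real.sqrt (2 * t)) / Real.sqrt (2 * Real.pi)) := by
          gcongr
      _ = Real.exp (-t) / Real.sqrt (Real.pi * t) := h1
  linarith [key]

lemma aux_tendsto_zero :
    Tendsto (fun t : ℝ => Real.exp (-t) / Real.sqrt (Real.pi * t)) atTop (nhds 0) := by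
  refine tendsto_of_tendsto_of_tendsto_of_le_of_le' tendsto_const_nhds
    (Real.tendsto_exp_neg_atTop_nhds_zero) ?_ ?_
  · filter_upwards [eventually_gt_atTop 0] with t ht
    positivity
  · filter_upwards [eventually_ge_atTop (1 / Real.pi)] with t ht
    have h1 : (1:ℝ) ≤ Real.sqrt (Real.pi * t) := by
      rw [show (1:ℝ) = Real.sqrt 1 by simp]
      apply Real.sqrt_le_sqrt
      rw [div_le_iff₀ Real.pi_pos] at ht
      linarith
    calc Real.exp (-t) / Real.sqrt (Real.pi * t) ≤ Real.exp (-t) / 1 := by gcongr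
      _ = Real.exp (-t) := by rw [div_one]

lemma psi_tendsto_atTop : Tendsto psi atTop (nhds 2) := by
  have h2 : Tendsto (fun t : ℝ => 2 + Real.exp (-t) / Real.sqrt (Real.pi * t)) atTop
      (nhds 2) := by
    simpa using tendsto_const_nhds.add aux_tendsto_zero
  refine tendsto_of_tendsto_of_tendsto_of_le_of_le' tendsto_const_nhds h2 ?_ ?_
  · filter_upwards [eventually_gt_atTop 0] with t ht
    exact (psi_gt_two ht).le
  · filter_upwards [eventually_gt_atTop 0] with t ht
    unfold psi
    have := Phi_le_one (Real.sqrt (2 * t))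
    linarith

lemma psi_tendsto_zero :
    Tendsto (fun t => psi t * Real.sqrt (Real.pi * t)) (nhdsWithin 0 (Set.Ioi 0)) (nhds 1) := by
  have hsq : Tendsto (fun t : ℝ => Real.sqrt (Real.pi * t)) (nhdsWithin 0 (Set.Ioi 0))
      (nhds 0) := by
    have : Continuous (fun t : ℝ => Real.sqrt (Real.pi * t)) :=
      Real.continuous_sqrt.comp (continuous_const.mul continuous_id)
    have := this.tendsto' 0 0 (by simp)
    exact this.mono_left nhdsWithin_le_nhds
  have hexp : Tendsto (fun t : ℝ => Real.exp (-t)) (nhdsWithin 0 (Set.Ioi 0)) (nhds 1) := by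
    have : Continuous (fun t : ℝ => Real.exp (-t)) := Real.continuous_exp.comp continuous_neg
    have := this.tendsto' 0 1 (by simp)
    exact this.mono_left nhdsWithin_le_nhds
  have hPhi : Tendsto (fun t : ℝ => 2 * Phi (Real.sqrt (2 * t)) * Real.sqrt (Real.pi * t))
      (nhdsWithin 0 (Set.Ioi 0)) (nhds 0) := by
    refine tendsto_of_tendsto_of_tendsto_of_le_of_le' tendsto_const_nhds
      (by simpa using (tendsto_const_nhds (x := (2:ℝ))).mul hsq) ?_ ?_
    · filter_upwards [self_mem_nhdsWithin] with t ht
      have := Phi_nonneg (Real.sqrt (2 * t))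
      positivity
    · filter_upwards [self_mem_nhdsWithin] with t ht
      have h1 := Phi_le_one (Real.sqrt (2 * t))
      have h0 := Real.sqrt_nonneg (Real.pi * t)
      nlinarith [Phi_nonneg (Real.sqrt (2 * t))]
  have heq : ∀ t ∈ Set.Ioi (0:ℝ), psi t * Real.sqrt (Real.pi * t)
      = Real.exp (-t) + 2 * Phi (Real.sqrt (2 * t)) * Real.sqrt (Real.pi * t) := by
    intro t ht
    have hp : Real.sqrt (Real.pi * t) ≠ 0 := by
      have : (0:ℝ) < Real.pi * t := by have := ht.out; positivity
      exact (Real.sqrt_pos.mpr this).ne'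
    unfold psi
    rw [add_mul, div_mul_cancel₀ _ hp]
  have := (hexp.add hPhi)
  rw [show (1:ℝ) = 1 + 0 by ring]
  refine Tendsto.congr' ?_ this
  filter_upwards [self_mem_nhdsWithin] with t ht
  exact (heq t ht).symm

theorem psi_gt_two_and_asymptotics :
    (∀ t : ℝ, 0 < t → 2 < psi t) ∧
    Tendsto psi atTop (nhds 2) ∧
    Tendsto (fun t => psi t * Real.sqrt (Real.pi * t)) (nhdsWithin 0 (Set.Ioi 0)) (nhds 1) := by
  exact ⟨fun t ht => psi_gt_two ht, psi_tendsto_atTop, psi_tendsto_zero⟩
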